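/- Let n ≥ 1, H = ((Fin n → Bool) → ℂ), 𝒫 the Pauli group, and C_m the Clifford hierarchy as defined below. Suppose m ≥ 1 and U is a unitary on H with U ∈ C_m and U ∉ C_{m−1}. Then there exist Pauli operators P₁, …, P_m ∈ 𝒫 such that the m-fold sequential group commutator K(⋯K(K(U, P₁), P₂)⋯, P_m) is not the identity, where K(A,B) = A⁻¹B⁻¹AB. -/

import Mathlib

/-- The Hilbert space of `n` qubits: `(Fin n → Bool) → ℂ` with its standard Hermitian
inner product. -/
abbrev QHilb (n : ℕ) : Type := EuclideanSpace ℂ (Fin n → Bool)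

/-- Flipping the `j`-th bit, as a permutation of basis configurations. -/
def bitFlip {n : ℕ} (j : Fin n) : (Fin n → Bool) ≃ (Fin n → Bool) :=
  Function.Involutive.toPerm (fun x => Function.update x j (!(x j)))
    (fun x => by
      funext k
      by_cases hk : k = j
      · subst hk; simp
      · simp [Function.update_of_ne hk])

/-- The bit-flip (Pauli `X`) unitary on the `j`-th qubit:
`(X_j f)(x) = f(x with the j-th bit flipped)`. -/
noncomputable def Xu {n : ℕ} (j : Fin n) : QHilb n ≃ₗᵢ[ℂ] QHilb n where
  toLinearEquiv :=
    { toFun := fun f => WithLp.toLp 2 (fun x => f (Function.update x j (!(x j))))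
      invFun := fun f => WithLp.toLp 2 (fun x => f (Function.update x j (!(x j))))
      map_add' := fun f f' => rfl
      map_smul' := fun c f => rfl
      left_inv := fun f => by
        ext x
        show f (Function.update (Function.update x j (!(x j))) j
          (!(Function.update x j (!(x j)) j))) = f x
        refine congrArg (WithLp.ofLp f) ?_
        funext k
        by_cases hk : k = j
        · subst hk; simp
        · simp [Function.update_of_ne hk]
      right_inv := fun f => by
        ext x
        show f (Function.update (Function.update x j (!(x j))) j
          (!(Function.update x j (!(x j)) j))) = f x
        refine congrArg (WithLp.ofLp f) ?_
        funext k
        by_cases hk : k = j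
        · subst hk; simp
        · simp [Function.update_of_ne hk] }
  norm_map' := fun f => by
    rw [EuclideanSpace.norm_eq, EuclideanSpace.norm_eq]
    congr 1
    exact Equiv.sum_comp (bitFlip j) (fun x => ‖f x‖ ^ 2)

/-- The sign (Pauli `Z`) unitary on the `j`-th qubit: `(Z_j f)(x) = (−1)^{x_j}·f(x)`. -/
noncomputable def Zu {n : ℕ} (j : Fin n) : QHilb n ≃ₗᵢ[ℂ] QHilb n where
  toLinearEquiv :=
    { toFun := fun f => WithLp.toLp 2 (fun x => (-1 : ℂ) ^ (if x j then 1 else 0 : ℕ) * f x)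
      invFun := fun f => WithLp.toLp 2 (fun x => (-1 : ℂ) ^ (if x j then 1 else 0 : ℕ) * f x)
      map_add' := fun f f' => by ext x; simp [mul_add]
      map_smul' := fun c f => by ext x; simp; try ring
      left_inv := fun f => by
        ext x
        show (-1 : ℂ) ^ _ * ((-1 : ℂ) ^ _ * f x) = f x
        rw [← mul_assoc, ← pow_add, Even.neg_one_pow ⟨_, rfl⟩, one_mul]
      right_inv := fun f => by
        ext x
        show (-1 : ℂ) ^ _ * ((-1 : ℂ) ^ _ * f x) = f x
        rw [← mul_assoc, ← pow_add, Even.neg_one_pow ⟨_, rfl⟩, one_mul] }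
  norm_map' := fun f => by
    rw [EuclideanSpace.norm_eq, EuclideanSpace.norm_eq]
    congr 1
    refine Finset.sum_congr rfl fun x _ => ?_
    show ‖(-1 : ℂ) ^ (if x j then 1 else 0 : ℕ) * f x‖ ^ 2 = ‖f x‖ ^ 2
    by_cases h : x j <;> simp [h]

/-- The global phase unitary `i·id`. -/
noncomputable def Iu (n : ℕ) : QHilb n ≃ₗᵢ[ℂ] QHilb n where
  toLinearEquiv :=
    { toFun := fun f => Complex.I • f
      invFun := fun f => (-Complex.I) • f
      map_add' := fun f f' => smul_add _ _ _
      map_smul' := fun c f => smul_comm _ _ _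
      left_inv := fun f => by
        show (-Complex.I) • (Complex.I • f) = f
        rw [smul_smul, neg_mul, Complex.I_mul_I, neg_neg, one_smul]
      right_inv := fun f => by
        show Complex.I • ((-Complex.I) • f) = f
        rw [smul_smul, mul_neg, Complex.I_mul_I, neg_neg, one_smul] }
  norm_map' := fun f => by
    show ‖Complex.I • f‖ = ‖f‖
    rw [norm_smul, Complex.norm_I, one_mul]

/-- The Pauli group on `n` qubits: the subgroup of unitaries generated by `i·id`, the
bit-flip operators `X_j` and the sign operators `Z_j`. -/
noncomputable def PauliGroup (n : ℕ) : Subgroup (QHilb n ≃ₗᵢ[ℂ] QHilb n) :=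
  Subgroup.closure ({Iu n} ∪ Set.range (Xu (n := n)) ∪ Set.range (Zu (n := n)))

/-- The Clifford hierarchy: `C₀` consists of the global phases `c·id` (`|c| = 1`), and
`C_{m+1} = {U : ∀ P ∈ 𝒫, P⁻¹U⁻¹PU ∈ C_m}`. -/
noncomputable def CliffordLevel (n : ℕ) : ℕ → Set (QHilb n ≃ₗᵢ[ℂ] QHilb n)
  | 0 => {U | ∃ c : ℂ, ‖c‖ = 1 ∧ ∀ f : QHilb n, U f = c • f}
  | m + 1 => {U | ∀ P ∈ PauliGroup n, P⁻¹ * U⁻¹ * P * U ∈ CliffordLevel n m}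


section CliffordAux

variable {n : ℕ}

lemma mem_pauli_Xu (j : Fin n) : Xu j ∈ PauliGroup n := by
  apply Subgroup.subset_closure
  left; right; exact ⟨j, rfl⟩

lemma mem_pauli_Zu (j : Fin n) : Zu j ∈ PauliGroup n := by
  apply Subgroup.subset_closure
  right; exact ⟨j, rfl⟩

/-- Clifford levels are closed under conjugation by Pauli operators. -/
lemma conj_mem_level : ∀ (k : ℕ) (Q : QHilb n ≃ₗᵢ[ℂ] QHilb n), Q ∈ PauliGroup n →
    ∀ V ∈ CliffordLevel n k, Q⁻¹ * V * Q ∈ CliffordLevel n k := by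
  intro k
  induction k with
  | zero =>
    rintro Q _ V ⟨c, hc, hV⟩
    refine ⟨c, hc, fun f => ?_⟩
    show Q⁻¹ (V (Q f)) = c • f
    rw [hV (Q f), map_smul]
    exact congrArg (c • ·) (Q.symm_apply_apply f)
  | succ k ih =>
    intro Q hQ V hV
    intro P hP
    have hmem : Q * P * Q⁻¹ ∈ PauliGroup n := mul_mem (mul_mem hQ hP) (inv_mem hQ)
    have key : P⁻¹ * (Q⁻¹ * V * Q)⁻¹ * P * (Q⁻¹ * V * Q)
        = Q⁻¹ * ((Q*P*Q⁻¹)⁻¹ * V⁻¹ * (Q*P*Q⁻¹) * V) * Q := by group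
    rw [key]
    exact ih Q hQ _ (hV _ hmem)

/-- A unitary commuting with all bit-flip and sign operators is a scalar. -/
lemma commuting_scalar (W : QHilb n ≃ₗᵢ[ℂ] QHilb n)
    (hX : ∀ (j : Fin n) (f : QHilb n), W (Xu j f) = Xu j (W f))
    (hZ : ∀ (j : Fin n) (f : QHilb n), W (Zu j f) = Zu j (W f)) :
    W ∈ CliffordLevel n 0 := by
  classical
  set δ : (Fin n → Bool) → QHilb n := fun x => EuclideanSpace.single x 1 with hδ
  have neg_self : ∀ a : ℂ, -a = a → a = 0 := by
    intro a h
    have h2 : (2:ℂ) * a = 0 := by linear_combination -h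
    have := mul_eq_zero.mp h2
    rcases this with h3 | h3
    · exact absurd h3 (by norm_num)
    · exact h3
  have hZδ : ∀ (j : Fin n) (x : Fin n → Bool),
      Zu j (δ x) = ((-1:ℂ) ^ (if x j then 1 else 0 : ℕ)) • δ x := by
    intro j x
    ext y
    show (-1:ℂ) ^ (if y j then 1 else 0 : ℕ) * δ x y
      = (-1:ℂ) ^ (if x j then 1 else 0 : ℕ) * δ x y
    by_cases h : y = x
    · subst h; rfl
    · have h0 : δ x y = 0 := by simp [hδ, EuclideanSpace.single_apply, h]
      rw [h0, mul_zero, mul_zero]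
  have hWδ : ∀ x, W (δ x) = (W (δ x) x) • δ x := by
    intro x
    ext y
    show W (δ x) y = (W (δ x) x) * δ x y
    by_cases h : y = x
    · rw [h]
      have h1 : δ x x = 1 := by simp [hδ, EuclideanSpace.single_apply]
      rw [h1, mul_one]
    · have h0 : δ x y = 0 := by simp [hδ, EuclideanSpace.single_apply, h]
      rw [h0, mul_zero]
      obtain ⟨j, hj⟩ : ∃ j, y j ≠ x j := by
        by_contra hc
        push_neg at hc
        exact h (funext hc)
      have h1 : Zu j (W (δ x)) = ((-1:ℂ) ^ (if x j then 1 else 0 : ℕ)) • W (δ x) := by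
        rw [← hZ, hZδ, map_smul]
      have h2 := congrArg (fun v => v y) h1
      have h3 : (-1:ℂ) ^ (if y j then 1 else 0 : ℕ) * (W (δ x) y)
          = (-1:ℂ) ^ (if x j then 1 else 0 : ℕ) * (W (δ x) y) := h2
      cases hyj : y j <;> cases hxj : x j <;> rw [hyj, hxj] at h3 hj
      · exact absurd rfl hj
      · norm_num at h3
        first
        | exact h3
        | exact h3.symm
        | exact neg_self _ h3
        | exact neg_self _ h3.symm
      · norm_num at h3
        first
        | exact h3
        | exact h3.symm
        | exact neg_self _ h3
        | exact neg_self _ h3.symm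
      · exact absurd rfl hj
  have hXδ : ∀ (j : Fin n) (x : Fin n → Bool),
      Xu j (δ x) = δ (Function.update x j (!(x j))) := by
    intro j x
    ext y
    show δ x (Function.update y j (!(y j))) = δ (Function.update x j (!(x j))) y
    have hiff : (Function.update y j (!(y j)) = x) ↔ (y = Function.update x j (!(x j))) := by
      constructor
      · rintro rfl
        funext k
        by_cases hk : k = j
        · subst hk; simp
        · simp [Function.update_of_ne hk]
      · rintro rfl
        funext k
        by_cases hk : k = j
        · subst hk; simp
        · simp [Function.update_of_ne hk]
    simp only [hδ, EuclideanSpace.single_apply]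
    rw [if_congr hiff rfl rfl]
  set c : (Fin n → Bool) → ℂ := fun x => W (δ x) x with hc
  have hstep : ∀ (j : Fin n) (x : Fin n → Bool),
      c (Function.update x j (!(x j))) = c x := by
    intro j x
    have e1 : W (δ (Function.update x j (!(x j)))) = c x • δ (Function.update x j (!(x j))) := by
      rw [← hXδ, hX, hWδ x, map_smul, hXδ]
    have e2 := congrArg (fun v => v (Function.update x j (!(x j)))) e1
    have e3 : c (Function.update x j (!(x j)))
        = c x * δ (Function.update x j (!(x j))) (Function.update x j (!(x j))) := e2
    rw [e3]
    have : δ (Function.update x j (!(x j))) (Function.update x j (!(x j))) = 1 := by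
      simp [hδ, EuclideanSpace.single_apply]
    rw [this, mul_one]
  have hconst : ∀ x, c x = c (fun _ => false) := by
    have aux : ∀ (N : ℕ) (x : Fin n → Bool),
        (Finset.univ.filter (fun j => x j = true)).card = N → c x = c (fun _ => false) := by
      intro N
      induction N with
      | zero =>
        intro x hx
        have hempty := Finset.card_eq_zero.mp hx
        have : x = fun _ => false := by
          funext j
          by_contra hj
          have hjt : x j = true := by
            cases hxj : x j
            · exact absurd (by rw [hxj]) hj
            · rfl
          have : j ∈ Finset.univ.filter (fun j => x j = true) := by
            simp [hjt]
          rw [hempty] at this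
          exact absurd this (Finset.notMem_empty j)
        rw [this]
      | succ N ih =>
        intro x hx
        have hpos : 0 < (Finset.univ.filter (fun j => x j = true)).card := by omega
        obtain ⟨j, hj⟩ := Finset.card_pos.mp hpos
        have hjt : x j = true := by simpa using hj
        set x' := Function.update x j false with hx'
        have hxx' : x' = Function.update x j (!(x j)) := by rw [hjt]; rfl
        have hcc : c x' = c x := by rw [hxx']; exact hstep j x
        have hfilter : (Finset.univ.filter (fun k => x' k = true))
            = (Finset.univ.filter (fun k => x k = true)).erase j := by
          ext k
          by_cases hk : k = j
          · subst hk
            simp [hx', Function.update_self]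
          · simp [hx', Function.update_of_ne hk, hk]
        have hcard : (Finset.univ.filter (fun k => x' k = true)).card = N := by
          rw [hfilter, Finset.card_erase_of_mem hj, hx]
          rfl
        rw [← hcc]
        exact ih x' hcard
    intro x
    exact aux _ x rfl
  refine ⟨c (fun _ => false), ?_, ?_⟩
  · have h1 : ‖W (δ (fun _ => false))‖ = 1 := by
      rw [W.norm_map]
      simp [hδ]
    rw [hWδ, norm_smul] at h1
    have h2 : ‖δ (fun (_ : Fin n) => false)‖ = 1 := by simp [hδ]
    rw [h2, mul_one] at h1
    exact h1
  · intro f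
    have hf : f = ∑ x, f x • δ x := by
      ext z
      have : (∑ x, f x • δ x) z = ∑ x, (f x • δ x) z := by
        rw [WithLp.ofLp_sum]; exact Finset.sum_apply z Finset.univ _
      rw [this]
      simp [hδ, EuclideanSpace.single_apply]
    have step1 : W f = ∑ x, f x • (c x • δ x) := by
      conv_lhs => rw [hf]
      rw [map_sum]
      refine Finset.sum_congr rfl fun x _ => ?_
      rw [map_smul, hWδ x]
    rw [step1]
    have step2 : ∀ x : Fin n → Bool,
        f x • (c x • δ x) = c (fun _ => false) • (f x • δ x) := by
      intro x
      rw [hconst x, smul_comm]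
    rw [Finset.sum_congr rfl (fun x _ => step2 x), ← Finset.smul_sum, ← hf]

/-- If `W` is not a scalar, some single commutator with a Pauli is nontrivial. -/
lemma not_level_zero (W : QHilb n ≃ₗᵢ[ℂ] QHilb n) (hW : W ∉ CliffordLevel n 0) :
    ∃ P ∈ PauliGroup n, W⁻¹ * P⁻¹ * W * P ≠ 1 := by
  by_contra hcon
  push_neg at hcon
  apply hW
  have hcomm : ∀ (P : QHilb n ≃ₗᵢ[ℂ] QHilb n), P ∈ PauliGroup n →
      ∀ f, W (P f) = P (W f) := by
    intro P hP f
    have h := hcon P hP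
    have h2 : W * P = P * W := by
      have := congrArg (fun z => P * W * z) h
      simpa [mul_assoc] using this
    exact congrArg (fun (z : QHilb n ≃ₗᵢ[ℂ] QHilb n) => z f) h2
  exact commuting_scalar W
    (fun j f => hcomm (Xu j) (mem_pauli_Xu j) f)
    (fun j f => hcomm (Zu j) (mem_pauli_Zu j) f)

/-- If `W` is not at level `k+1`, some single commutator with a Pauli is not at level `k`. -/
lemma not_level_succ (k : ℕ) (W : QHilb n ≃ₗᵢ[ℂ] QHilb n)
    (hW : W ∉ CliffordLevel n (k + 1)) :
    ∃ P ∈ PauliGroup n, W⁻¹ * P⁻¹ * W * P ∉ CliffordLevel n k := by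
  have : ¬ ∀ P ∈ PauliGroup n, P⁻¹ * W⁻¹ * P * W ∈ CliffordLevel n k := hW
  push_neg at this
  obtain ⟨P, hP, hc⟩ := this
  refine ⟨P⁻¹, inv_mem hP, fun hmem => hc ?_⟩
  have key : P⁻¹ * (W⁻¹ * (P⁻¹)⁻¹ * W * P⁻¹) * P = P⁻¹ * W⁻¹ * P * W := by group
  rw [← key]
  exact conj_mem_level k P hP _ hmem

/-- Main induction: escape from level `k` is detected by `k+1` sequential commutators. -/
lemma main_escape : ∀ (k : ℕ) (W : QHilb n ≃ₗᵢ[ℂ] QHilb n), W ∉ CliffordLevel n k →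
    ∃ P : Fin (k + 1) → (QHilb n ≃ₗᵢ[ℂ] QHilb n), (∀ j, P j ∈ PauliGroup n) ∧
      List.foldl (fun A B => A⁻¹ * B⁻¹ * A * B) W (List.ofFn P) ≠ 1 := by
  intro k
  induction k with
  | zero =>
    intro W hW
    obtain ⟨P, hP, hne⟩ := not_level_zero W hW
    refine ⟨fun _ => P, fun _ => hP, ?_⟩
    simpa using hne
  | succ k ih =>
    intro W hW
    obtain ⟨P₀, hP₀, hnot⟩ := not_level_succ k W hW
    obtain ⟨P', hP', hne⟩ := ih _ hnot
    refine ⟨Fin.cons P₀ P', ?_, ?_⟩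
    · intro j
      refine Fin.cases ?_ ?_ j
      · simpa using hP₀
      · intro i; simpa using hP' i
    · rw [List.ofFn_succ]
      simpa using hne

end CliffordAux

/-- If `U` lies in the `m`-th level of the Clifford hierarchy but not in
the `(m−1)`-th level (`m ≥ 1`), then some `m`-fold sequential group commutator of `U` with
Pauli operators, `K(⋯K(K(U,P₁),P₂)⋯,P_m)` with `K(A,B) = A⁻¹B⁻¹AB`, is not the identity. -/
theorem exists_nontrivial_sequential_commutator (n : ℕ) (hn : 1 ≤ n) (m : ℕ) (hm : 1 ≤ m)
    (U : QHilb n ≃ₗᵢ[ℂ] QHilb n) (hU : U ∈ CliffordLevel n m)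
    (hU' : U ∉ CliffordLevel n (m - 1)) :
    ∃ P : Fin m → (QHilb n ≃ₗᵢ[ℂ] QHilb n), (∀ j, P j ∈ PauliGroup n) ∧
      List.foldl (fun A B => A⁻¹ * B⁻¹ * A * B) U (List.ofFn P) ≠ 1 := by
  obtain ⟨k, rfl⟩ : ∃ k, m = k + 1 := ⟨m - 1, (Nat.succ_pred_eq_of_pos hm).symm⟩
  have hU'' : U ∉ CliffordLevel n k := by simpa using hU'
  exact main_escape k U hU''
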